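/- Let R > 1 and let ω be a holomorphic function on the annulus A(1/R, R) = {z ∈ ℂ : 1/R < |z| < R} with |ω(z)| < 1 for all z. Then for every z ∈ A(1/R, R), |ω'(z)| < π·(1 − |ω(z)|²) / (4·|z|·log R · cos(π·log|z|/(2·log R))). (Note that |log|z|| < log R on the annulus, so the cosine is positive.) -/

import Mathlib

open Complex Metric MeasureTheory

/-- Wirtinger derivative ∂f/∂z = (f_x - i f_y)/2. -/
noncomputable def wz (f : ℂ → ℂ) (z : ℂ) : ℂ :=
  (fderiv ℝ f z 1 - Complex.I * fderiv ℝ f z Complex.I) / 2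

/-- Wirtinger derivative ∂f/∂z̄ = (f_x + i f_y)/2. -/
noncomputable def wzbar (f : ℂ → ℂ) (z : ℂ) : ℂ :=
  (fderiv ℝ f z 1 + Complex.I * fderiv ℝ f z Complex.I) / 2

/-- Euclidean Laplacian of a real-valued function on ℂ. -/
noncomputable def lap (u : ℂ → ℝ) (z : ℂ) : ℝ :=
  fderiv ℝ (fun w => fderiv ℝ u w 1) z 1 +
  fderiv ℝ (fun w => fderiv ℝ u w Complex.I) z Complex.I

/-- ∂_w u = (u_x - i u_y)/2 for a real-valued u, as a complex number. -/
noncomputable def dw (u : ℂ → ℝ) (w : ℂ) : ℂ :=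
  ((fderiv ℝ u w 1 : ℝ) - Complex.I * (fderiv ℝ u w Complex.I : ℝ)) / 2

/-- f is ℘-harmonic on D: f_{zz̄} + 2 (∂_w log ℘)∘f · f_z · f_{z̄} = 0. -/
def PHarmOn (p : ℂ → ℝ) (f : ℂ → ℂ) (D : Set ℂ) : Prop :=
  ∀ z ∈ D,
    wzbar (fun w => wz f w) z
      + 2 * dw (fun w => Real.log (p w)) (f z) * wz f z * wzbar f z = 0

/-- |∇u|² for a real-valued u on ℂ. -/
noncomputable def gradSq (u : ℂ → ℝ) (w : ℂ) : ℝ :=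
  (fderiv ℝ u w 1) ^ 2 + (fderiv ℝ u w Complex.I) ^ 2

/-- The ℘-minimal surface equation div(∇ω/√(1+|∇ω|²/℘²)) = 0 on Ω. -/
def MinSurfEq (p : ℂ → ℝ) (ω : ℂ → ℝ) (Ω : Set ℂ) : Prop :=
  ∀ w ∈ Ω,
    fderiv ℝ (fun v => fderiv ℝ ω v 1 / Real.sqrt (1 + gradSq ω v / (p v) ^ 2)) w 1 +
    fderiv ℝ (fun v => fderiv ℝ ω v Complex.I / Real.sqrt (1 + gradSq ω v / (p v) ^ 2)) w
      Complex.I = 0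

/-- The annulus {z : r < |z| < R}. -/
def Ann (r R : ℝ) : Set ℂ := {z : ℂ | r < ‖z‖ ∧ ‖z‖ < R}

lemma normSq_lt_one_iff {b : ℂ} : Complex.normSq b < 1 ↔ ‖b‖ < 1 := by
  rw [← Complex.sq_norm]
  constructor
  · intro h; nlinarith [norm_nonneg b]
  · intro h; nlinarith [norm_nonneg b]

lemma abs_lt_abs_of_normSq_lt {u v : ℂ} (h : Complex.normSq u < Complex.normSq v) :
    ‖u‖ < ‖v‖ := by
  rw [Complex.norm_def, Complex.norm_def]
  exact Real.sqrt_lt_sqrt (Complex.normSq_nonneg _) h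

lemma strictSP (g : ℂ → ℂ) (hd : DifferentiableOn ℂ g (ball 0 1))
    (hm : Set.MapsTo g (ball 0 1) (ball 0 1)) {w₁ : ℂ} (hw₁ : w₁ ∈ ball 0 1)
    (hne : w₁ ≠ 0) (heq : g w₁ = g 0) :
    ‖deriv g 0‖ < 1 - ‖g 0‖ ^ 2 := by
  have h01 : (0:ℂ) ∈ ball (0:ℂ) 1 := mem_ball_self one_pos
  set α := g 0 with hαdef
  have hα : ‖α‖ < 1 := mem_ball_zero_iff.1 (hm h01)
  have hden : ∀ b : ℂ, ‖b‖ < 1 → 1 - (starRingEnd ℂ) α * b ≠ 0 := by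
    intro b hb h0
    have h1 : (starRingEnd ℂ) α * b = 1 := by linear_combination -h0
    have h2 : ‖(starRingEnd ℂ) α * b‖ = 1 := by rw [h1]; simp
    rw [norm_mul, Complex.norm_conj] at h2
    nlinarith [norm_nonneg α, norm_nonneg b]
  have hkey : ∀ b : ℂ, Complex.normSq (1 - (starRingEnd ℂ) α * b) - Complex.normSq (b - α)
      = (1 - Complex.normSq α) * (1 - Complex.normSq b) := by
    intro b
    simp only [Complex.normSq_apply, Complex.sub_re, Complex.sub_im, Complex.mul_re,
      Complex.mul_im, Complex.one_re, Complex.one_im, Complex.conj_re, Complex.conj_im]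
    ring
  set h : ℂ → ℂ := fun w => (g w - α) / (1 - (starRingEnd ℂ) α * g w) with hhdef
  have hmaps : Set.MapsTo h (ball 0 1) (ball 0 1) := by
    intro w hw
    have hgw : ‖g w‖ < 1 := mem_ball_zero_iff.1 (hm hw)
    have hd0 := hden (g w) hgw
    have hlt : Complex.normSq (g w - α) < Complex.normSq (1 - (starRingEnd ℂ) α * g w) := by
      have := hkey (g w)
      have h1 : Complex.normSq α < 1 := normSq_lt_one_iff.2 hα
      have h2 : Complex.normSq (g w) < 1 := normSq_lt_one_iff.2 hgw
      nlinarith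
    have := abs_lt_abs_of_normSq_lt hlt
    rw [mem_ball_zero_iff, hhdef]
    simp only
    rw [norm_div, div_lt_one]
    · exact this
    · exact norm_pos_iff.2 hd0
  have hd' : DifferentiableOn ℂ h (ball 0 1) := by
    apply DifferentiableOn.div
    · exact hd.sub (differentiableOn_const _)
    · exact (differentiableOn_const _).sub ((differentiableOn_const _).mul hd)
    · intro w hw; exact hden (g w) (mem_ball_zero_iff.1 (hm hw))
  have h0 : h 0 = 0 := by simp [hhdef, hαdef]
  have hw1 : h w₁ = 0 := by simp [hhdef, heq]
  have hd0α : 1 - (starRingEnd ℂ) α * α ≠ 0 := hden α hα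
  have hB : HasDerivAt (fun u => (u - α) / (1 - (starRingEnd ℂ) α * u))
      ((1 - ((Complex.normSq α : ℝ) : ℂ))⁻¹) α := by
    have h1 : HasDerivAt (fun u : ℂ => u - α) 1 α := (hasDerivAt_id α).sub_const α
    have h2 : HasDerivAt (fun u : ℂ => 1 - (starRingEnd ℂ) α * u) (-(starRingEnd ℂ) α) α := by
      simpa using ((hasDerivAt_id α).const_mul ((starRingEnd ℂ) α)).const_sub 1
    have := h1.div h2 hd0α
    refine this.congr_deriv ?_
    have hns : ((Complex.normSq α : ℝ) : ℂ) = (starRingEnd ℂ) α * α := by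
      rw [Complex.normSq_eq_conj_mul_self]
    rw [hns]
    field_simp
    ring
  have hgd : HasDerivAt g (deriv g 0) 0 :=
    (hd.differentiableAt (isOpen_ball.mem_nhds h01)).hasDerivAt
  have hh : HasDerivAt h ((1 - ((Complex.normSq α : ℝ) : ℂ))⁻¹ * deriv g 0) 0 := by
    have := hB.comp 0 hgd
    exact this
  by_contra hcon
  push_neg at hcon
  have hα2 : 0 < 1 - ‖α‖ ^ 2 := by nlinarith [norm_nonneg α]
  have hderivh : deriv h 0 = (1 - ((Complex.normSq α : ℝ) : ℂ))⁻¹ * deriv g 0 := hh.deriv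
  have habs : 1 ≤ ‖deriv h 0‖ := by
    rw [hderivh, norm_mul, norm_inv]
    have : ‖1 - ((Complex.normSq α : ℝ) : ℂ)‖ = 1 - ‖α‖ ^ 2 := by
      rw [show ((1 : ℂ) - ((Complex.normSq α : ℝ) : ℂ)) = (((1 - Complex.normSq α : ℝ)) : ℂ) by
        push_cast; ring]
      rw [Complex.norm_real, Real.norm_eq_abs, abs_of_pos]
      · rw [← Complex.sq_norm]
      · have := Complex.sq_norm α; linarith
    rw [this]
    rw [inv_mul_eq_div, le_div_iff₀ hα2, one_mul]
    exact hcon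
  have hmaps' : Set.MapsTo h (ball 0 1) (ball (h 0) 1) := by rwa [h0]
  have hle := Complex.norm_dslope_le_div_of_mapsTo_ball hd' (hmaps'.mono_right ball_subset_closedBall) h01
  rw [dslope_same] at hle
  have heq1 : ‖dslope h 0 0‖ = 1 / 1 := by
    rw [dslope_same]
    have : ‖deriv h 0‖ = ‖deriv h 0‖ := rfl
    rw [this]
    rw [div_one]
    refine le_antisymm ?_ habs
    simpa using hle
  obtain ⟨C, hC, hEq⟩ :=
    Complex.affine_of_mapsTo_ball_of_exists_norm_dslope_eq_div' hd' (hmaps'.mono_right ball_subset_closedBall) ⟨0, h01, heq1⟩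
  have := hEq hw₁
  simp only [h0, sub_zero, zero_add, smul_eq_mul] at this
  rw [hw1] at this
  have hC0 : C ≠ 0 := by
    intro hc; rw [hc] at hC; simp at hC
  exact hC0 (by
    rcases mul_eq_zero.1 this.symm with h | h
    · exact absurd h hne
    · exact h)

lemma isOpen_Ann (r R : ℝ) : IsOpen (Ann r R) := by
  have : Ann r R = (fun z : ℂ => ‖z‖) ⁻¹' (Set.Ioo r R) := rfl
  rw [this]
  exact isOpen_Ioo.preimage continuous_norm


/-- Schwarz–Pick type inequality for holomorphic maps of the annulus
A(1/R,R) into the unit disk. -/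
theorem stmt11 (R : ℝ) (hR : 1 < R) (ω : ℂ → ℂ)
    (hω : DifferentiableOn ℂ ω (Ann (1/R) R))
    (hb : ∀ z ∈ Ann (1/R) R, ‖ω z‖ < 1) :
    ∀ z ∈ Ann (1/R) R,
      ‖deriv ω z‖ <
        Real.pi * (1 - ‖ω z‖ ^ 2) /
          (4 * ‖z‖ * Real.log R *
            Real.cos (Real.pi * Real.log (‖z‖) / (2 * Real.log R))) := by
  intro z hz
  obtain ⟨hz1, hz2⟩ := hz
  have hR0 : (0:ℝ) < R := lt_trans one_pos hR
  have hz0' : (0:ℝ) < ‖z‖ := lt_trans (by positivity) hz1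
  have hz0 : z ≠ 0 := by
    intro h; rw [h] at hz0'; simp at hz0'
  set a := Real.log R with hadef
  have ha : 0 < a := Real.log_pos hR
  have hπ : (0:ℝ) < Real.pi := Real.pi_pos
  set x := Real.log (‖z‖) with hxdef
  have hxa : |x| < a := by
    rw [abs_lt]
    constructor
    · have h1 : Real.log (1/R) < x := Real.log_lt_log (by positivity) hz1
      rwa [one_div, Real.log_inv] at h1
    · exact Real.log_lt_log hz0' hz2
  rw [abs_lt] at hxa
  set s := Real.pi * x / (2 * a) with hsdef
  have hs2 : |s| < Real.pi / 2 := by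
    rw [hsdef, abs_div, abs_mul, abs_of_pos hπ, abs_of_pos (by linarith : (0:ℝ) < 2*a)]
    rw [div_lt_iff₀ (by linarith : (0:ℝ) < 2*a)]
    have : |x| < a := abs_lt.2 hxa
    nlinarith [abs_nonneg x]
  rw [abs_lt] at hs2
  have hcos : 0 < Real.cos s := Real.cos_pos_of_mem_Ioo ⟨by linarith, hs2.2⟩
  set β : ℂ := Complex.exp ((-s : ℝ) * Complex.I) with hβdef
  have hβabs : ‖β‖ = 1 := by
    rw [hβdef, Complex.norm_exp]
    simp
  have hβre : β.re = Real.cos s := by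
    rw [hβdef, Complex.exp_ofReal_mul_I_re, Real.cos_neg]
  have hβn : Complex.normSq β = 1 := by
    rw [← Complex.sq_norm, hβabs]; norm_num
  have hβn' : β.re * β.re + β.im * β.im = 1 := by
    have := hβn; rwa [Complex.normSq_apply] at this
  have hβ0 : β ≠ 0 := by
    intro h; rw [h] at hβabs; simp at hβabs
  -- denominator nonvanishing on the ball
  have hden : ∀ w : ℂ, ‖w‖ < 1 → 1 - β * w ≠ 0 := by
    intro w hw h0
    have h1 : β * w = 1 := by linear_combination -h0
    have h2 : ‖β * w‖ = 1 := by rw [h1]; simp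
    rw [norm_mul, hβabs, one_mul] at h2
    linarith [h2 ▸ hw]
  set T : ℂ → ℂ := fun w => (β + w) / (1 - β * w) with hTdef
  -- real part of T is positive on the ball
  have hTre : ∀ w : ℂ, ‖w‖ < 1 → 0 < (T w).re := by
    intro w hw
    have hd0 := hden w hw
    have hnum : (β + w).re * (1 - β * w).re + (β + w).im * (1 - β * w).im
        = β.re * (1 - Complex.normSq w) := by
      simp only [Complex.add_re, Complex.add_im, Complex.sub_re, Complex.sub_im,
        Complex.mul_re, Complex.mul_im, Complex.one_re, Complex.one_im, Complex.normSq_apply]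
      linear_combination (-(w.re)) * hβn'
    have hTw : (T w).re = β.re * (1 - Complex.normSq w) / Complex.normSq (1 - β * w) := by
      rw [hTdef]
      simp only
      rw [Complex.div_re, ← add_div, hnum]
    rw [hTw]
    have h1 : 0 < Complex.normSq (1 - β * w) := Complex.normSq_pos.2 hd0
    have h2 : Complex.normSq w < 1 := by
      rw [← Complex.sq_norm]; nlinarith [norm_nonneg w]
    have h3 : 0 < β.re := by rw [hβre]; exact hcos
    exact div_pos (mul_pos h3 (by linarith)) h1
  have hslit : ∀ w : ℂ, ‖w‖ < 1 → T w ∈ Complex.slitPlane := fun w hw =>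
    Complex.mem_slitPlane_iff.2 (Or.inl (hTre w hw))
  set ψ : ℂ → ℂ := fun w =>
    ((2 * a / Real.pi : ℝ) : ℂ) * Complex.I * Complex.log (T w) + (Complex.log z - (x:ℂ))
    with hψdef
  -- real part of ψ is in (-a, a)
  have hψre : ∀ w : ℂ, ‖w‖ < 1 → |(ψ w).re| < a := by
    intro w hw
    have harg : |(Complex.log (T w)).im| < Real.pi / 2 := by
      rw [Complex.log_im]
      exact Complex.abs_arg_lt_pi_div_two_iff.2 (Or.inl (hTre w hw))
    have hre : (ψ w).re = -(2 * a / Real.pi) * (Complex.log (T w)).im := by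
      rw [hψdef]
      simp [Complex.add_re, Complex.sub_re, Complex.mul_re, Complex.mul_im,
        Complex.log_re, hxdef]
    rw [hre, abs_mul, abs_neg, abs_of_pos (by positivity : (0:ℝ) < 2*a/Real.pi)]
    calc 2 * a / Real.pi * |(Complex.log (T w)).im| < 2*a/Real.pi * (Real.pi/2) := by
          apply mul_lt_mul_of_pos_left harg (by positivity)
      _ = a := by field_simp
  -- the composed map lands in the annulus
  have hmem : ∀ w : ℂ, ‖w‖ < 1 → Complex.exp (ψ w) ∈ Ann (1/R) R := by
    intro w hw
    have h1 := hψre w hw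
    rw [abs_lt] at h1
    have habs : ‖Complex.exp (ψ w)‖ = Real.exp ((ψ w).re) := Complex.norm_exp _
    constructor
    · rw [habs]
      have : Real.exp (-a) < Real.exp ((ψ w).re) := Real.exp_lt_exp.2 h1.1
      calc (1/R : ℝ) = Real.exp (-a) := by
            rw [hadef, Real.exp_neg, Real.exp_log hR0, one_div]
        _ < _ := this
    · rw [habs]
      calc Real.exp ((ψ w).re) < Real.exp a := Real.exp_lt_exp.2 h1.2
        _ = R := Real.exp_log hR0
  set g : ℂ → ℂ := fun w => ω (Complex.exp (ψ w)) with hgdef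
  -- differentiability of ψ
  have hψdiff : ∀ w : ℂ, ‖w‖ < 1 → DifferentiableAt ℂ ψ w := by
    intro w hw
    have hTd : DifferentiableAt ℂ T w := by
      apply DifferentiableAt.div
      · exact (differentiableAt_id.const_add β)
      · exact (differentiableAt_const 1).sub (differentiableAt_id.const_mul β)
      · exact hden w hw
    have hld : DifferentiableAt ℂ Complex.log (T w) :=
      (Complex.hasDerivAt_log (hslit w hw)).differentiableAt
    exact ((hld.comp w hTd).const_mul _).add_const _
  have hgd : DifferentiableOn ℂ g (ball 0 1) := by
    intro w hw
    rw [mem_ball_zero_iff] at hw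
    have h1 : DifferentiableAt ℂ (fun w => Complex.exp (ψ w)) w :=
      ((hψdiff w hw).cexp)
    have h2 : DifferentiableAt ℂ ω (Complex.exp (ψ w)) :=
      hω.differentiableAt ((isOpen_Ann _ _).mem_nhds (hmem w hw))
    exact ((h2.comp w h1)).differentiableWithinAt
  have hgm : Set.MapsTo g (ball 0 1) (ball 0 1) := by
    intro w hw
    rw [mem_ball_zero_iff] at hw ⊢
    exact hb _ (hmem w hw)
  -- ψ 0 = log z
  have hT0 : T 0 = β := by rw [hTdef]; simp
  have hlogβ : Complex.log β = ((-s : ℝ) : ℂ) * Complex.I := by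
    rw [hβdef]
    apply Complex.log_exp
    · simp only [Complex.mul_im, Complex.ofReal_re, Complex.ofReal_im, Complex.I_re,
        Complex.I_im, Complex.ofReal_neg, Complex.neg_re, Complex.neg_im]
      simp only [mul_one, mul_zero, zero_mul, add_zero, zero_add]
      linarith
    · simp only [Complex.mul_im, Complex.ofReal_re, Complex.ofReal_im, Complex.I_re,
        Complex.I_im, Complex.ofReal_neg, Complex.neg_re, Complex.neg_im]
      simp only [mul_one, mul_zero, zero_mul, add_zero, zero_add]
      linarith
  have hcx : (2 * a / Real.pi) * s = x := by
    rw [hsdef]; field_simp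
  have hψ0 : ψ 0 = Complex.log z := by
    rw [hψdef]
    simp only [hT0, hlogβ]
    have hcx' : 2 * (a:ℂ) / (Real.pi:ℂ) * (s:ℂ) = (x:ℂ) := by exact_mod_cast hcx
    have : ((2 * a / Real.pi : ℝ) : ℂ) * Complex.I * (((-s : ℝ) : ℂ) * Complex.I) = (x:ℂ) := by
      push_cast
      linear_combination (-(2*(a:ℂ) / (Real.pi:ℂ) * (s:ℂ))) * Complex.I_sq + hcx'
    rw [this]; ring
  have hexpψ0 : Complex.exp (ψ 0) = z := by rw [hψ0, Complex.exp_log hz0]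
  -- construction of w₁
  set u : ℂ := ((Real.pi^2 / a : ℝ) : ℂ) + ((-s : ℝ) : ℂ) * Complex.I with hudef
  set q : ℂ := Complex.exp u with hqdef
  have hure : u.re = Real.pi^2 / a := by
    rw [hudef, Complex.add_re, Complex.ofReal_re, Complex.mul_re, Complex.ofReal_re,
      Complex.ofReal_im, Complex.I_re, Complex.I_im]
    ring
  have huim : u.im = -s := by
    rw [hudef, Complex.add_im, Complex.ofReal_im, Complex.mul_im, Complex.ofReal_re,
      Complex.ofReal_im, Complex.I_re, Complex.I_im]
    ring
  have hqabs : ‖q‖ = Real.exp (Real.pi^2 / a) := by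
    rw [hqdef, Complex.norm_exp, hure]
  have hq1 : 1 < ‖q‖ := by
    rw [hqabs]
    have : (0:ℝ) < Real.pi^2/a := by positivity
    calc (1:ℝ) = Real.exp 0 := by simp
      _ < _ := Real.exp_lt_exp.2 this
  have hqre : 0 < q.re := by
    rw [hqdef, Complex.exp_re, hure, huim, Real.cos_neg]
    positivity
  have hden2 : 1 + β * q ≠ 0 := by
    intro h0
    have h1 : β * q = -1 := by linear_combination h0
    have h2 : ‖β * q‖ = 1 := by rw [h1]; simp
    rw [norm_mul, hβabs, one_mul] at h2
    linarith
  set w₁ : ℂ := (q - β) / (1 + β * q) with hw₁def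
  have hw₁ball : ‖w₁‖ < 1 := by
    have hkey : Complex.normSq (1 + β * q) - Complex.normSq (q - β) = 4 * β.re * q.re := by
      simp only [Complex.normSq_apply, Complex.add_re, Complex.add_im, Complex.sub_re,
        Complex.sub_im, Complex.mul_re, Complex.mul_im, Complex.one_re, Complex.one_im]
      linear_combination (q.re^2 + q.im^2 - 1) * hβn'
    have h3 : 0 < β.re := by rw [hβre]; exact hcos
    have hlt : Complex.normSq (q - β) < Complex.normSq (1 + β * q) := by nlinarith
    have := Real.sqrt_lt_sqrt (Complex.normSq_nonneg _) hlt
    rw [← Complex.norm_def, ← Complex.norm_def] at this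
    rw [hw₁def, norm_div, div_lt_one (norm_pos_iff.2 hden2)]
    exact this
  have hw₁ne : w₁ ≠ 0 := by
    rw [hw₁def]
    apply div_ne_zero
    · intro h0
      have : q = β := by linear_combination h0
      rw [this, hβabs] at hq1
      linarith
    · exact hden2
  have h1β2 : 1 + β * β ≠ 0 := by
    intro h0
    have : (1 + β * β).re = 0 := by rw [h0]; simp
    rw [Complex.add_re, Complex.one_re, Complex.mul_re] at this
    have h4 : β.re * β.re - β.im * β.im = 2 * β.re^2 - 1 := by
      linear_combination -hβn'
    rw [h4] at this
    have h3 : 0 < β.re := by rw [hβre]; exact hcos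
    have h5 : 0 < β.re^2 := pow_pos h3 2
    linarith
  have hdenw₁ : 1 - β * w₁ ≠ 0 := hden w₁ hw₁ball
  have hT1 : T w₁ = q := by
    have e1 : 1 - β * w₁ = (1 + β * β) / (1 + β * q) := by
      rw [hw₁def]; field_simp; ring
    have e2 : β + w₁ = q * (1 + β * β) / (1 + β * q) := by
      rw [hw₁def]; field_simp; ring
    rw [hTdef]
    simp only
    rw [e1, e2, div_div_div_cancel_right₀ hden2]
    exact mul_div_cancel_right₀ q h1β2
  have hlogq : Complex.log q = u := by
    rw [hqdef]
    apply Complex.log_exp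
    · rw [huim]; linarith
    · rw [huim]; linarith
  have hψw₁ : ψ w₁ = Complex.log z + 2 * Real.pi * Complex.I := by
    rw [hψdef]
    simp only [hT1, hlogq, hudef]
    have hc2 : (2 * a / Real.pi) * (Real.pi^2 / a) = 2 * Real.pi := by
      field_simp
    have : ((2 * a / Real.pi : ℝ) : ℂ) * Complex.I *
        (((Real.pi^2 / a : ℝ) : ℂ) + ((-s : ℝ) : ℂ) * Complex.I)
        = (x:ℂ) + 2 * (Real.pi:ℂ) * Complex.I := by
      have hcx' : 2 * (a:ℂ) / (Real.pi:ℂ) * (s:ℂ) = (x:ℂ) := by exact_mod_cast hcx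
      have hc2' : 2 * (a:ℂ) / (Real.pi:ℂ) * ((Real.pi:ℂ)^2 / (a:ℂ)) = 2 * (Real.pi:ℂ) := by
        exact_mod_cast hc2
      push_cast
      linear_combination (-(2*(a:ℂ)/(Real.pi:ℂ) * (s:ℂ))) * Complex.I_sq +
        Complex.I * hc2' + hcx'
    rw [this]; push_cast; ring
  have hgw₁ : g w₁ = g 0 := by
    rw [hgdef]
    simp only
    rw [hψw₁, hψ0, Complex.exp_add, Complex.exp_two_pi_mul_I, mul_one]
  -- derivative computation
  have hT' : HasDerivAt T (1 + β^2) 0 := by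
    have h1 : HasDerivAt (fun w : ℂ => β + w) 1 0 := by
      simpa using (hasDerivAt_id (0:ℂ)).const_add β
    have h2 : HasDerivAt (fun w : ℂ => 1 - β * w) (-β) 0 := by
      simpa using ((hasDerivAt_id (0:ℂ)).const_mul β).const_sub 1
    have h3 := h1.div h2 (by simpa using hden 0 (by simp))
    refine h3.congr_deriv ?_
    simp only [mul_zero, sub_zero, add_zero, one_pow, div_one, one_mul]
    ring
  have hlog' : HasDerivAt Complex.log β⁻¹ (T 0) := by
    rw [hT0]
    exact Complex.hasDerivAt_log (by
      apply Complex.mem_slitPlane_iff.2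
      exact Or.inl (by rw [hβre]; exact hcos))
  have hψ' : HasDerivAt ψ (((2 * a / Real.pi : ℝ) : ℂ) * Complex.I * (β⁻¹ * (1 + β^2))) 0 := by
    have h1 : HasDerivAt (fun w => Complex.log (T w)) (β⁻¹ * (1 + β^2)) 0 := hlog'.comp 0 hT'
    exact (h1.const_mul _).add_const _
  have hexp' : HasDerivAt (fun w => Complex.exp (ψ w))
      (Complex.exp (ψ 0) * (((2 * a / Real.pi : ℝ) : ℂ) * Complex.I * (β⁻¹ * (1 + β^2)))) 0 :=
    hψ'.cexp
  have hω' : HasDerivAt ω (deriv ω z) (Complex.exp (ψ 0)) := by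
    rw [hexpψ0]
    exact (hω.differentiableAt ((isOpen_Ann _ _).mem_nhds ⟨hz1, hz2⟩)).hasDerivAt
  have hg' : HasDerivAt g (deriv ω z *
      (Complex.exp (ψ 0) * (((2 * a / Real.pi : ℝ) : ℂ) * Complex.I * (β⁻¹ * (1 + β^2))))) 0 := by
    have := hω'.comp 0 hexp'
    exact this
  -- simplify β⁻¹ * (1 + β²)
  have hβinv : β⁻¹ = Complex.exp ((s : ℝ) * Complex.I) := by
    rw [hβdef, ← Complex.exp_neg]
    congr 1
    push_cast
    ring
  have hsimp : β⁻¹ * (1 + β^2) = ((2 * Real.cos s : ℝ) : ℂ) := by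
    have h1 : β⁻¹ * (1 + β^2) = β⁻¹ + β := by
      field_simp
    rw [h1, hβinv, hβdef]
    push_cast
    rw [Complex.exp_mul_I, Complex.exp_mul_I]
    push_cast
    rw [Complex.cos_neg, Complex.sin_neg, ← Complex.ofReal_cos]
    ring
  -- apply strict Schwarz-Pick
  have hg0 : g 0 = ω z := by rw [hgdef]; simp only; rw [hexpψ0]
  have hSP := strictSP g hgd hgm (mem_ball_zero_iff.2 hw₁ball) hw₁ne hgw₁
  rw [hg0] at hSP
  have hderivg : ‖deriv g 0‖
      = ‖deriv ω z‖ * (‖z‖ * (2 * a / Real.pi * (2 * Real.cos s))) := by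
    rw [hg'.deriv, hexpψ0, hsimp]
    rw [norm_mul, norm_mul, norm_mul, norm_mul]
    rw [Complex.norm_real, Real.norm_eq_abs, Complex.norm_real, Real.norm_eq_abs, Complex.norm_I]
    rw [abs_of_pos (by positivity : (0:ℝ) < 2*a/Real.pi),
        abs_of_pos (by positivity : (0:ℝ) < 2*Real.cos s)]
    ring
  rw [hderivg] at hSP
  -- final algebra
  have hpos : 0 < 4 * ‖z‖ * a * Real.cos s := by positivity
  rw [lt_div_iff₀ hpos]
  have hπne : Real.pi ≠ 0 := ne_of_gt hπ
  have hmm : (‖z‖ * (2 * a / Real.pi * (2 * Real.cos s))) * Real.pi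
      = 4 * ‖z‖ * a * Real.cos s := by
    field_simp; ring
  calc ‖deriv ω z‖ * (4 * ‖z‖ * a * Real.cos s)
      = (‖deriv ω z‖ * (‖z‖ * (2 * a / Real.pi * (2 * Real.cos s)))) * Real.pi := by
        rw [← hmm]; ring
    _ < (1 - ‖ω z‖^2) * Real.pi := by
        exact mul_lt_mul_of_pos_right hSP hπ
    _ = Real.pi * (1 - ‖ω z‖^2) := by ring
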